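/- Let g : ℕ → ℝ≥0 be the multiplicative function with g(p^k) = k+1 if the prime p lies in [Y, 2Y] and g(p^k) = 1 otherwise, where Y ≥ 2. Then for every N ≥ 2, ∑_{n ≤ N} g(n)²/n² = O(1), with an absolute implied constant independent of Y and N. -/

import Mathlib

open Finset ArithmeticFunction
open scoped ArithmeticFunction.sigma

-- basic: partial sums of 1/n^2 bounded by 2
lemma my_sum_inv_sq (N : ℕ) : ∑ a ∈ Finset.Icc 1 N, (1:ℝ) / (a:ℝ) ^ 2 ≤ 2 := by
  rcases Nat.eq_zero_or_pos N with h | h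
  · simp [h]
  · rw [Finset.Icc_eq_cons_Ioc h, Finset.sum_cons]
    have := sum_Ioc_inv_sq_le_sub (α := ℝ) (k := 1) (n := N) one_ne_zero h
    have h2 : ∀ a ∈ Finset.Ioc 1 N, (1:ℝ)/(a:ℝ)^2 = ((a:ℝ)^2)⁻¹ := by
      intro a _; rw [one_div]
    rw [Finset.sum_congr rfl h2]
    have hN : (0:ℝ) ≤ (N:ℝ)⁻¹ := by positivity
    norm_num at this ⊢
    nlinarith

-- swap: sum over n ≤ N of sum over divisor pairs ≤ sum over product box
lemma my_swap (F : ℕ × ℕ → ℝ) (hF : ∀ p, 0 ≤ F p) (N : ℕ) :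
    ∑ n ∈ Finset.Icc 1 N, ∑ p ∈ n.divisorsAntidiagonal, F p ≤
      ∑ p ∈ Finset.Icc 1 N ×ˢ Finset.Icc 1 N, F p := by
  have key : ∀ n ∈ Finset.Icc 1 N, n.divisorsAntidiagonal =
      (Finset.Icc 1 N ×ˢ Finset.Icc 1 N).filter (fun p => p.1 * p.2 = n) := by
    intro n hn
    rw [Finset.mem_Icc] at hn
    ext p
    simp only [Nat.mem_divisorsAntidiagonal, Finset.mem_filter, Finset.mem_product,
      Finset.mem_Icc]
    constructor
    · rintro ⟨hmul, hne⟩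
      have hp1 : 0 < p.1 := Nat.pos_of_ne_zero (by intro h0; rw [h0] at hmul; simp at hmul; omega)
      have hp2 : 0 < p.2 := Nat.pos_of_ne_zero (by intro h0; rw [h0] at hmul; simp at hmul; omega)
      refine ⟨⟨⟨hp1, ?_⟩, ⟨hp2, ?_⟩⟩, hmul⟩
      · calc p.1 ≤ p.1 * p.2 := Nat.le_mul_of_pos_right _ hp2
          _ = n := hmul
          _ ≤ N := hn.2
      · calc p.2 ≤ p.1 * p.2 := Nat.le_mul_of_pos_left _ hp1
          _ = n := hmul
          _ ≤ N := hn.2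
    · rintro ⟨_, hmul⟩
      exact ⟨hmul, by omega⟩
  rw [Finset.sum_congr rfl fun n hn => by rw [key n hn]]
  rw [Finset.sum_fiberwise_eq_sum_filter]
  exact Finset.sum_le_sum_of_subset_of_nonneg (Finset.filter_subset _ _)
    (fun p _ _ => hF p)

lemma my_tau_sum (N : ℕ) :
    ∑ n ∈ Finset.Icc 1 N, ((σ 0 n : ℕ) : ℝ) / (n:ℝ) ^ 2 ≤ 4 := by
  have step : ∀ n ∈ Finset.Icc 1 N, ((σ 0 n : ℕ) : ℝ) / (n:ℝ) ^ 2 =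
      ∑ p ∈ n.divisorsAntidiagonal, (1 / (p.1:ℝ)^2) * (1 / (p.2:ℝ)^2) := by
    intro n hn
    rw [Finset.mem_Icc] at hn
    have : ∀ p ∈ n.divisorsAntidiagonal,
        (1 / (p.1:ℝ)^2) * (1 / (p.2:ℝ)^2) = 1 / (n:ℝ)^2 := by
      intro p hp
      rw [Nat.mem_divisorsAntidiagonal] at hp
      rw [← hp.1]
      push_cast
      rw [mul_pow]
      rw [div_mul_div_comm, one_mul]
    rw [Finset.sum_congr rfl this,
      Nat.sum_divisorsAntidiagonal (fun _ _ => 1/(n:ℝ)^2), Finset.sum_const,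
      ArithmeticFunction.sigma_zero_apply, nsmul_eq_mul]
    ring
  rw [Finset.sum_congr rfl step]
  calc ∑ n ∈ Finset.Icc 1 N, ∑ p ∈ n.divisorsAntidiagonal,
        (1 / (p.1:ℝ)^2) * (1 / (p.2:ℝ)^2)
      ≤ ∑ p ∈ Finset.Icc 1 N ×ˢ Finset.Icc 1 N, (1 / (p.1:ℝ)^2) * (1 / (p.2:ℝ)^2) :=
        my_swap _ (fun p => by positivity) N
    _ = (∑ a ∈ Finset.Icc 1 N, 1/(a:ℝ)^2) * (∑ b ∈ Finset.Icc 1 N, 1/(b:ℝ)^2) := by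
        rw [Finset.sum_product]
        simp_rw [← Finset.sum_mul_sum]
    _ ≤ 2 * 2 := by
        have h1 := my_sum_inv_sq N
        have h2 : (0:ℝ) ≤ ∑ a ∈ Finset.Icc 1 N, 1/(a:ℝ)^2 := by positivity
        nlinarith
    _ = 4 := by norm_num

noncomputable def myD : ArithmeticFunction ℕ := σ 0 * σ 0

lemma myD_mult : myD.IsMultiplicative :=
  ArithmeticFunction.isMultiplicative_sigma.mul ArithmeticFunction.isMultiplicative_sigma

lemma myD_sum (N : ℕ) :
    ∑ n ∈ Finset.Icc 1 N, ((myD n : ℕ) : ℝ) / (n:ℝ) ^ 2 ≤ 16 := by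
  have step : ∀ n ∈ Finset.Icc 1 N, ((myD n : ℕ) : ℝ) / (n:ℝ) ^ 2 =
      ∑ p ∈ n.divisorsAntidiagonal,
        (((σ 0 p.1 : ℕ):ℝ) / (p.1:ℝ)^2) * (((σ 0 p.2 : ℕ):ℝ) / (p.2:ℝ)^2) := by
    intro n hn
    have expand : ∀ p ∈ n.divisorsAntidiagonal,
        (((σ 0 p.1 : ℕ):ℝ) / (p.1:ℝ)^2) * (((σ 0 p.2 : ℕ):ℝ) / (p.2:ℝ)^2) =
          ((σ 0 p.1 * σ 0 p.2 : ℕ) : ℝ) / (n:ℝ)^2 := by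
      intro p hp
      rw [Nat.mem_divisorsAntidiagonal] at hp
      rw [← hp.1]
      push_cast
      rw [mul_pow]
      field_simp
    rw [Finset.sum_congr rfl expand, ← Finset.sum_div]
    congr 1
    rw [myD, ArithmeticFunction.mul_apply]
    push_cast
    rfl
  rw [Finset.sum_congr rfl step]
  calc ∑ n ∈ Finset.Icc 1 N, ∑ p ∈ n.divisorsAntidiagonal,
        (((σ 0 p.1 : ℕ):ℝ) / (p.1:ℝ)^2) * (((σ 0 p.2 : ℕ):ℝ) / (p.2:ℝ)^2)
      ≤ ∑ p ∈ Finset.Icc 1 N ×ˢ Finset.Icc 1 N,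
        (((σ 0 p.1 : ℕ):ℝ) / (p.1:ℝ)^2) * (((σ 0 p.2 : ℕ):ℝ) / (p.2:ℝ)^2) :=
        my_swap _ (fun p => by positivity) N
    _ = (∑ a ∈ Finset.Icc 1 N, ((σ 0 a : ℕ):ℝ)/(a:ℝ)^2) *
        (∑ b ∈ Finset.Icc 1 N, ((σ 0 b : ℕ):ℝ)/(b:ℝ)^2) := by
        rw [Finset.sum_product]
        simp_rw [← Finset.sum_mul_sum]
    _ ≤ 4 * 4 := by
        have h1 := my_tau_sum N
        have h2 : (0:ℝ) ≤ ∑ a ∈ Finset.Icc 1 N, ((σ 0 a : ℕ):ℝ)/(a:ℝ)^2 := by positivity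
        nlinarith
    _ = 16 := by norm_num

lemma myD_prime_pow_ge {p : ℕ} (hp : p.Prime) (k : ℕ) :
    (k + 1) * (k + 1) ≤ myD (p ^ k) := by
  have expand : myD (p ^ k) = ∑ i ∈ Finset.range (k + 1), (σ 0 (p ^ i)) * (σ 0 (p ^ k / p ^ i)) := by
    rw [myD, ArithmeticFunction.mul_apply,
      Nat.sum_divisorsAntidiagonal (fun a b => σ 0 a * σ 0 b),
      Nat.sum_divisors_prime_pow hp]
  rw [expand]
  have hterm : ∀ i ∈ Finset.range (k + 1), k + 1 ≤ (σ 0 (p ^ i)) * (σ 0 (p ^ k / p ^ i)) := by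
    intro i hi
    rw [Finset.mem_range] at hi
    have hik : i ≤ k := by omega
    have hdiv : p ^ k / p ^ i = p ^ (k - i) := by
      rw [Nat.pow_div hik hp.pos]
    rw [hdiv, ArithmeticFunction.sigma_zero_apply_prime_pow hp,
      ArithmeticFunction.sigma_zero_apply_prime_pow hp]
    have : i + (k - i) = k := by omega
    nlinarith [Nat.sub_le k i, this]
  calc (k + 1) * (k + 1) = ∑ _i ∈ Finset.range (k + 1), (k + 1) := by
        rw [Finset.sum_const, Finset.card_range, smul_eq_mul]
    _ ≤ _ := Finset.sum_le_sum hterm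

lemma my_pointwise (Y : ℕ) (g : ℕ → ℝ) (hg1 : g 1 = 1)
    (hmult : ∀ m n : ℕ, Nat.Coprime m n → g (m * n) = g m * g n)
    (hpp : ∀ p k : ℕ, p.Prime → 1 ≤ k →
      g (p ^ k) = if Y ≤ p ∧ p ≤ 2 * Y then (k : ℝ) + 1 else 1)
    {n : ℕ} (hn : n ≠ 0) : g n ^ 2 ≤ ((myD n : ℕ) : ℝ) := by
  set f : ℕ → ℝ := fun m => g m ^ 2 with hf
  have hfmult : ∀ x y : ℕ, Nat.Coprime x y → f (x * y) = f x * f y := by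
    intro x y hxy
    simp only [hf, hmult x y hxy, mul_pow]
  have hf1 : f 1 = 1 := by simp [hf, hg1]
  have hD : ((myD n : ℕ) : ℝ)
      = n.factorization.prod fun p k => ((myD (p ^ k) : ℕ) : ℝ) := by
    apply Nat.multiplicative_factorization (fun m => ((myD m : ℕ) : ℝ)) _ _ hn
    · intro x y hxy
      push_cast [myD_mult.map_mul_of_coprime hxy]
      ring
    · simp [myD_mult.map_one]
  have hg : f n = n.factorization.prod fun p k => f (p ^ k) :=
    Nat.multiplicative_factorization f hfmult hf1 hn
  show f n ≤ _
  rw [hg, hD, Finsupp.prod, Finsupp.prod]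
  apply Finset.prod_le_prod
  · intro p _; positivity
  · intro p hps
    have hp : p.Prime := Nat.prime_of_mem_primeFactors (by
      rwa [Nat.support_factorization] at hps)
    set k := n.factorization p with hk
    have hk1 : 1 ≤ k := (n.factorization.mem_support_toFun p).mp hps |> fun h =>
      Nat.one_le_iff_ne_zero.mpr h
    have hbound : f (p ^ k) ≤ ((k:ℝ) + 1) ^ 2 := by
      rw [hf]
      simp only
      rw [hpp p k hp hk1]
      split
      · exact le_refl _
      · nlinarith [Nat.cast_nonneg (α := ℝ) k]
    refine hbound.trans ?_
    have := myD_prime_pow_ge hp k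
    have : ((k + 1) * (k + 1) : ℕ) ≤ (myD (p ^ k) : ℕ) := this
    calc ((k:ℝ) + 1) ^ 2 = (((k + 1) * (k + 1) : ℕ) : ℝ) := by push_cast; ring
      _ ≤ _ := Nat.cast_le.mpr this

/-- Let `g` be the multiplicative function with `g(p^k) = k+1` for primes
`p ∈ [Y, 2Y]` and `g(p^k) = 1` otherwise. Then `∑_{n ≤ N} g(n)²/n² = O(1)`
uniformly in `Y` and `N`. -/
theorem shiu_type_bound :
    ∃ C > 0, ∀ Y : ℕ, 2 ≤ Y → ∀ g : ℕ → ℝ,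
      g 1 = 1 →
      (∀ m n : ℕ, Nat.Coprime m n → g (m * n) = g m * g n) →
      (∀ p k : ℕ, p.Prime → 1 ≤ k →
        g (p ^ k) = if Y ≤ p ∧ p ≤ 2 * Y then (k : ℝ) + 1 else 1) →
      ∀ N : ℕ, 2 ≤ N →
        ∑ n ∈ Finset.Icc 1 N, (g n) ^ 2 / (n : ℝ) ^ 2 ≤ C := by
  refine ⟨16, by norm_num, fun Y _ g hg1 hmult hpp N _ => ?_⟩
  calc ∑ n ∈ Finset.Icc 1 N, (g n) ^ 2 / (n : ℝ) ^ 2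
      ≤ ∑ n ∈ Finset.Icc 1 N, ((myD n : ℕ) : ℝ) / (n:ℝ) ^ 2 := by
        apply Finset.sum_le_sum
        intro n hn
        rw [Finset.mem_Icc] at hn
        have hn0 : n ≠ 0 := by omega
        have hnpos : (0:ℝ) ≤ (n:ℝ)^2 := by positivity
        exact div_le_div_of_nonneg_right (my_pointwise Y g hg1 hmult hpp hn0) hnpos
    _ ≤ 16 := myD_sum N
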